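/- Let K_∞ = F_q((1/t)) and let L_i(u) = Σ_{j=1}^s γ_{i,j} u_j (i = 1,...,s) be linear forms with symmetric coefficient matrix (γ_{i,j} = γ_{j,i}) over K_∞. For real a and Z, let M(a;Z) be the number of tuples (u_1,...,u_{2s}) ∈ F_q[t]^{2s} with |u_j| < q^{a+Z} for j = 1,...,s and |L_i(u) + u_{s+i}| < q^{Z−a} for i = 1,...,s. Then whenever Z_1 ≤ Z_2 ≤ 0, one has M(a;Z_1)/M(a;Z_2) ≫ q^{s(Z_1−Z_2)}, with an implied constant depending only on s and q. -/

import Mathlib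

noncomputable section

open scoped BigOperators Classical

variable (Fq : Type) [Field Fq] [Fintype Fq]

/-- `t` as an element of `K_∞ = F_q((1/t))`, realized as Laurent series in `X = t⁻¹`. -/
def tvar : LaurentSeries Fq := HahnSeries.single (-1 : ℤ) 1

/-- The embedding of `A = F_q[t]` into `K_∞`. -/
def polyEmb : Polynomial Fq →+* LaurentSeries Fq := (Polynomial.aeval (tvar Fq)).toRingHom

/-- The absolute value `|α| = q^{ord α}` on `K_∞`. -/
def Kabs (α : LaurentSeries Fq) : ℝ :=
  if α = 0 then 0 else (Fintype.card Fq : ℝ) ^ (-(HahnSeries.order α))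

/-- The fractional part `{α}₀`: keep only the strictly negative powers of `t`. -/
def fracPart (α : LaurentSeries Fq) : LaurentSeries Fq :=
  ⟨fun n => if 0 < n then α.coeff n else 0, α.isPWO_support'.mono (by
    intro n hn
    by_cases h : 0 < n
    · simpa [Function.mem_support, h] using hn
    · simp [Function.mem_support, h] at hn)⟩

/-- `⟨α⟩ = |{α}₀|`. -/
def frabs (α : LaurentSeries Fq) : ℝ := Kabs Fq (fracPart Fq α)

/-- The standard additive character `E` on `K_∞`. -/
def Echar (α : LaurentSeries Fq) : ℂ :=
  letI : Algebra (ZMod (ringChar Fq)) Fq := ZMod.algebra _ _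
  Complex.exp (2 * Real.pi * Complex.I *
    (((Algebra.trace (ZMod (ringChar Fq)) Fq (α.coeff 1)).val : ℂ) / (ringChar Fq : ℂ)))

/-- The polynomial with coefficient tuple `v` (degree `< c`). -/
def polyOfTuple {c : ℕ} (v : Fin c → Fq) : Polynomial Fq :=
  ∑ j : Fin c, Polynomial.C (v j) * Polynomial.X ^ (j : ℕ)

/-- Max-norm of a tuple in `K_∞^D`. -/
def Knorm {D : ℕ} (x : Fin D → LaurentSeries Fq) : ℝ := ⨆ i, Kabs Fq (x i)


/-- `M(a;Z)`: the number of `(u₁,...,u_{2s}) ∈ F_q[t]^{2s}` with `|u_j| < q^{a+Z}`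
for `j ≤ s` and `|L_i(u) + u_{s+i}| < q^{Z-a}` for `i ≤ s`. -/
def Mcount {s : ℕ} (γ : Matrix (Fin s) (Fin s) (LaurentSeries Fq)) (a Z : ℝ) : ℕ :=
  Set.ncard {uv : (Fin s → Polynomial Fq) × (Fin s → Polynomial Fq) |
    (∀ j, Kabs Fq (polyEmb Fq (uv.1 j)) < (Fintype.card Fq : ℝ) ^ (a + Z)) ∧
    ∀ i, Kabs Fq ((∑ j, γ i j * polyEmb Fq (uv.1 j)) + polyEmb Fq (uv.2 i))
      < (Fintype.card Fq : ℝ) ^ (Z - a)}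

/-! ### Auxiliary machinery for the shrinking lemma -/

set_option linter.unusedSectionVars false
set_option maxHeartbeats 1000000

section ShrinkAux

variable {Fq}
variable {s : ℕ}

/-- all coefficients below `b` vanish. -/
def SmallAt (x : LaurentSeries Fq) (b : ℤ) : Prop := ∀ n < b, x.coeff n = 0

lemma smallAt_mono {x : LaurentSeries Fq} {b b' : ℤ} (h : b' ≤ b) (hx : SmallAt x b) :
    SmallAt x b' := fun n hn => hx n (lt_of_lt_of_le hn h)

lemma smallAt_zero (b : ℤ) : SmallAt (0 : LaurentSeries Fq) b := fun _ _ => rfl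

lemma smallAt_add {x y : LaurentSeries Fq} {b : ℤ} (hx : SmallAt x b) (hy : SmallAt y b) :
    SmallAt (x + y) b := fun n hn => by
  rw [HahnSeries.coeff_add, hx n hn, hy n hn, add_zero]

lemma smallAt_smul {x : LaurentSeries Fq} {b : ℤ} (κ : Fq) (hx : SmallAt x b) :
    SmallAt (κ • x) b := fun n hn => by
  rw [HahnSeries.coeff_smul, hx n hn, smul_zero]

lemma smallAt_mul {x y : LaurentSeries Fq} {a b : ℤ} (hx : SmallAt x a) (hy : SmallAt y b)
    {n : ℤ} (hn : n < a + b) : (x * y).coeff n = 0 := by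
  rw [HahnSeries.coeff_mul]
  refine Finset.sum_eq_zero fun ij hij => ?_
  rw [Finset.mem_addAntidiagonal] at hij
  rcases lt_or_ge ij.1 a with h1 | h1
  · rw [hx ij.1 h1, zero_mul]
  · have : ij.2 < b := by omega
    rw [hy ij.2 this, mul_zero]

lemma smallAt_coeff_mul {x y : LaurentSeries Fq} {a b : ℤ} (hx : SmallAt x a)
    (hy : SmallAt y b) : (x * y).coeff (a + b) = x.coeff a * y.coeff b := by
  rw [HahnSeries.coeff_mul]
  rw [Finset.sum_eq_single (a, b)]
  · intro ij hij hne
    rw [Finset.mem_addAntidiagonal] at hij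
    rcases lt_or_ge ij.1 a with h1 | h1
    · rw [hx ij.1 h1, zero_mul]
    rcases lt_or_ge ij.2 b with h2 | h2
    · rw [hy ij.2 h2, mul_zero]
    · exfalso; apply hne
      have h1' : ij.1 = a := by omega
      have h2' : ij.2 = b := by omega
      exact Prod.ext h1' h2'
  · intro h
    rw [Finset.mem_addAntidiagonal] at h
    push_neg at h
    by_cases hxa : x.coeff a = 0
    · rw [hxa, zero_mul]
    by_cases hyb : y.coeff b = 0
    · rw [hyb, mul_zero]
    · exact absurd rfl (h hxa hyb)

lemma tvar_pow (k : ℕ) : (tvar Fq) ^ k = HahnSeries.single (-(k : ℤ)) 1 := by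
  induction k with
  | zero => simp only [pow_zero, Nat.cast_zero, neg_zero]; exact (HahnSeries.single_zero_one).symm
  | succ k ih =>
      rw [pow_succ, ih, tvar, HahnSeries.single_mul_single]
      congr 1
      · push_cast; ring_nf
      · rw [mul_one]

lemma polyEmb_monomial (k : ℕ) (a : Fq) :
    polyEmb Fq (Polynomial.monomial k a) = HahnSeries.single (-(k : ℤ)) a := by
  show (Polynomial.aeval (tvar Fq)) (Polynomial.monomial k a) = _
  rw [Polynomial.aeval_monomial, tvar_pow]
  have : (algebraMap Fq (LaurentSeries Fq)) a = HahnSeries.single (0 : ℤ) a := by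
    rw [HahnSeries.algebraMap_apply']
    simp only [PowerSeries.algebraMap_apply, Algebra.algebraMap_self_apply, HahnSeries.ofPowerSeries_C,
      HahnSeries.C_apply]
  rw [this, HahnSeries.single_mul_single, zero_add, mul_one]

lemma polyEmb_coeff (p : Polynomial Fq) (n : ℤ) :
    (polyEmb Fq p).coeff n = if 0 ≤ -n then p.coeff (-n).toNat else 0 := by
  induction p using Polynomial.induction_on' with
  | add f g hf hg =>
      rw [map_add, HahnSeries.coeff_add, hf, hg, Polynomial.coeff_add]
      split <;> simp
  | monomial k a =>
      rw [polyEmb_monomial, HahnSeries.coeff_single, Polynomial.coeff_monomial]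
      by_cases h : n = -(k : ℤ)
      · subst h
        simp
      · rw [if_neg h]
        split
        · rw [if_neg]
          omega
        · rfl

lemma polyEmb_coeff_pos {p : Polynomial Fq} {n : ℤ} (hn : 0 < n) :
    (polyEmb Fq p).coeff n = 0 := by
  rw [polyEmb_coeff, if_neg (by omega)]

lemma polyEmb_inj {p q : Polynomial Fq}
    (h : ∀ n : ℤ, (polyEmb Fq p).coeff n = (polyEmb Fq q).coeff n) : p = q := by
  ext k
  have := h (-(k : ℤ))
  rw [polyEmb_coeff, polyEmb_coeff] at this
  simpa using this

lemma polyEmb_C (κ : Fq) : polyEmb Fq (Polynomial.C κ) = HahnSeries.single (0 : ℤ) κ := by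
  rw [← Polynomial.monomial_zero_left, polyEmb_monomial]
  norm_num

lemma polyEmb_smul (κ : Fq) (p : Polynomial Fq) :
    polyEmb Fq (κ • p) = HahnSeries.single (0 : ℤ) κ * polyEmb Fq p := by
  rw [Polynomial.smul_eq_C_mul, map_mul, polyEmb_C]

lemma coeff_C_mul (κ : Fq) (x : LaurentSeries Fq) (n : ℤ) :
    (HahnSeries.single (0 : ℤ) κ * x).coeff n = κ * x.coeff n := by
  have := HahnSeries.coeff_single_mul_add (r := κ) (x := x) (a := n) (b := (0 : ℤ))
  rwa [add_zero] at this

lemma smallAt_C_mul {x : LaurentSeries Fq} {b : ℤ} (κ : Fq) (hx : SmallAt x b) :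
    SmallAt (HahnSeries.single (0 : ℤ) κ * x) b := fun n hn => by
  rw [coeff_C_mul, hx n hn, mul_zero]

lemma Kabs_lt_iff (x : LaurentSeries Fq) (c : ℝ) :
    Kabs Fq x < (Fintype.card Fq : ℝ) ^ c ↔ SmallAt x (⌊-c⌋ + 1) := by
  have hq : (1 : ℝ) < (Fintype.card Fq : ℝ) := by exact_mod_cast (Fintype.one_lt_card (α := Fq))
  have hq0 : (0 : ℝ) < (Fintype.card Fq : ℝ) := lt_trans one_pos hq
  by_cases hx : x = 0
  · subst hx
    simp only [Kabs, if_pos rfl]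
    constructor
    · intro _ n _; rfl
    · intro _; exact Real.rpow_pos_of_pos hq0 c
  · rw [Kabs, if_neg hx]
    have key : ((Fintype.card Fq : ℝ) ^ (-(x.order)) : ℝ)
        = (Fintype.card Fq : ℝ) ^ ((-(x.order) : ℤ) : ℝ) := by
      rw [Real.rpow_intCast]
    rw [key, Real.rpow_lt_rpow_left_iff hq]
    constructor
    · intro h n hn
      have ho : ⌊-c⌋ + 1 ≤ x.order := by
        have h1 : -c < ((x.order : ℤ) : ℝ) := by push_cast at h ⊢; linarith
        have := Int.floor_lt.mpr h1
        omega
      exact HahnSeries.coeff_eq_zero_of_lt_order (lt_of_lt_of_le hn ho)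
    · intro h
      have ho : ⌊-c⌋ + 1 ≤ x.order := by
        by_contra hlt
        push_neg at hlt
        exact (mt HahnSeries.coeff_order_eq_zero.mp hx) (h _ hlt)
      have h2 : -c < ((x.order : ℤ) : ℝ) := by
        exact_mod_cast Int.floor_lt.mp (by omega : ⌊-c⌋ < x.order)
      push_cast
      linarith

/-- the space of pairs of `s`-tuples of polynomials -/
abbrev PPair (Fq : Type) [Field Fq] (s : ℕ) : Type :=
  (Fin s → Polynomial Fq) × (Fin s → Polynomial Fq)

/-- the `i`-th "shifted linear form" `L_i(u) + u'_i` in `K_∞`. -/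
def wfun (γ : Matrix (Fin s) (Fin s) (LaurentSeries Fq)) (x : PPair Fq s) (i : Fin s) :
    LaurentSeries Fq :=
  (∑ j, γ i j * polyEmb Fq (x.1 j)) + polyEmb Fq (x.2 i)

lemma wfun_add (γ : Matrix (Fin s) (Fin s) (LaurentSeries Fq)) (x y : PPair Fq s) (i : Fin s) :
    wfun γ (x + y) i = wfun γ x i + wfun γ y i := by
  simp only [wfun, Prod.fst_add, Prod.snd_add, Pi.add_apply, map_add, mul_add,
    Finset.sum_add_distrib]
  abel

lemma wfun_smul (γ : Matrix (Fin s) (Fin s) (LaurentSeries Fq)) (κ : Fq) (x : PPair Fq s)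
    (i : Fin s) : wfun γ (κ • x) i = HahnSeries.single (0 : ℤ) κ * wfun γ x i := by
  simp only [wfun, Prod.smul_fst, Prod.smul_snd, Pi.smul_apply, polyEmb_smul,
    Finset.mul_sum, mul_add, mul_left_comm]

/-- The solution space at level `(b, c)`, as an `F_q`-submodule. -/
def SolM (γ : Matrix (Fin s) (Fin s) (LaurentSeries Fq)) (b c : ℤ) :
    Submodule Fq (PPair Fq s) where
  carrier := {x | (∀ j, SmallAt (polyEmb Fq (x.1 j)) b) ∧ ∀ i, SmallAt (wfun γ x i) c}
  zero_mem' := by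
    constructor
    · intro j
      have : polyEmb Fq ((0 : PPair Fq s).1 j) = 0 := by simp
      rw [this]; exact smallAt_zero b
    · intro i
      have : wfun γ (0 : PPair Fq s) i = 0 := by simp [wfun]
      rw [this]; exact smallAt_zero c
  add_mem' := by
    rintro x y ⟨hx1, hx2⟩ ⟨hy1, hy2⟩
    constructor
    · intro j
      have : polyEmb Fq ((x + y).1 j) = polyEmb Fq (x.1 j) + polyEmb Fq (y.1 j) := by
        simp [Prod.fst_add]
      rw [this]; exact smallAt_add (hx1 j) (hy1 j)
    · intro i
      rw [wfun_add]; exact smallAt_add (hx2 i) (hy2 i)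
  smul_mem' := by
    rintro κ x ⟨hx1, hx2⟩
    constructor
    · intro j
      have : polyEmb Fq ((κ • x).1 j)
          = HahnSeries.single (0 : ℤ) κ * polyEmb Fq (x.1 j) := by
        rw [Prod.smul_fst, Pi.smul_apply, polyEmb_smul]
      rw [this]; exact smallAt_C_mul κ (hx1 j)
    · intro i
      rw [wfun_smul]; exact smallAt_C_mul κ (hx2 i)

lemma mem_solM {γ : Matrix (Fin s) (Fin s) (LaurentSeries Fq)} {b c : ℤ} {x : PPair Fq s} :
    x ∈ SolM γ b c ↔ (∀ j, SmallAt (polyEmb Fq (x.1 j)) b) ∧ ∀ i, SmallAt (wfun γ x i) c :=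
  Iff.rfl

lemma solM_antitone {γ : Matrix (Fin s) (Fin s) (LaurentSeries Fq)} {b c b' c' : ℤ}
    (hb : b' ≤ b) (hc : c' ≤ c) : SolM γ b c ≤ SolM γ b' c' := by
  rintro x ⟨h1, h2⟩
  exact ⟨fun j => smallAt_mono hb (h1 j), fun i => smallAt_mono hc (h2 i)⟩

lemma solM_finite (γ : Matrix (Fin s) (Fin s) (LaurentSeries Fq)) (b c : ℤ) :
    Finite ↥(SolM γ b c) := by
  classical
  let T := ((Fin s → ((Finset.Icc b 0 : Finset ℤ) → Fq)) ×
    (Fin s → ((Finset.Icc c 0 : Finset ℤ) → Fq)))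
  let θ : ↥(SolM γ b c) → T := fun x =>
    (fun j m => (polyEmb Fq (x.1.1 j)).coeff m.1, fun i m => (wfun γ x.1 i).coeff m.1)
  have hθ : Function.Injective θ := by
    intro a b h
    obtain ⟨x, hx1, hx2⟩ := a
    obtain ⟨y, hy1, hy2⟩ := b
    have hA := congrArg Prod.fst h
    have hB := congrArg Prod.snd h
    simp only [θ] at hA hB
    have hfst : x.1 = y.1 := by
      funext j
      apply polyEmb_inj
      intro n
      rcases lt_or_ge n b with hn | hn
      · rw [hx1 j n hn, hy1 j n hn]
      rcases le_or_gt n 0 with hn0 | hn0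
      · exact congrFun (congrFun hA j) ⟨n, Finset.mem_Icc.mpr ⟨hn, hn0⟩⟩
      · rw [polyEmb_coeff_pos hn0, polyEmb_coeff_pos hn0]
    have hsnd : x.2 = y.2 := by
      funext i
      apply polyEmb_inj
      intro n
      have hw : ∀ m : ℤ, m ≤ 0 → (wfun γ x i).coeff m = (wfun γ y i).coeff m := by
        intro m hm0
        rcases lt_or_ge m c with hm | hm
        · rw [hx2 i m hm, hy2 i m hm]
        · exact congrFun (congrFun hB i) ⟨m, Finset.mem_Icc.mpr ⟨hm, hm0⟩⟩
      rcases le_or_gt n 0 with hn0 | hn0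
      · have := hw n hn0
        simp only [wfun, HahnSeries.coeff_add, hfst] at this
        exact add_left_cancel this
      · rw [polyEmb_coeff_pos hn0, polyEmb_coeff_pos hn0]
    exact Subtype.ext (Prod.ext hfst hsnd)
  exact Finite.of_injective θ hθ

lemma card_solM_le_of_le {γ : Matrix (Fin s) (Fin s) (LaurentSeries Fq)} {b c b' c' : ℤ}
    (hb : b' ≤ b) (hc : c' ≤ c) :
    Nat.card ↥(SolM γ b c) ≤ Nat.card ↥(SolM γ b' c') := by
  haveI := solM_finite γ b' c'
  exact Nat.card_le_card_of_injective _
    (Submodule.inclusion_injective (solM_antitone hb hc))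

/-- coefficient extraction as an additive map -/
def coeffHom (n : ℤ) : LaurentSeries Fq →+ Fq where
  toFun x := x.coeff n
  map_zero' := rfl
  map_add' _ _ := HahnSeries.coeff_add

/-- The quotient map recording the coefficients at level `(b, c)`. -/
def phiMap (γ : Matrix (Fin s) (Fin s) (LaurentSeries Fq)) (b c : ℤ) :
    PPair Fq s →ₗ[Fq] (Fin s → Fq) × (Fin s → Fq) where
  toFun x := (fun j => (polyEmb Fq (x.1 j)).coeff b, fun i => (wfun γ x i).coeff c)
  map_add' x y := by
    refine Prod.ext ?_ ?_ <;> funext k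
    · show (polyEmb Fq (x.1 k + y.1 k)).coeff b
        = (polyEmb Fq (x.1 k)).coeff b + (polyEmb Fq (y.1 k)).coeff b
      rw [map_add, HahnSeries.coeff_add]
    · show (wfun γ (x + y) k).coeff c = (wfun γ x k).coeff c + (wfun γ y k).coeff c
      rw [wfun_add, HahnSeries.coeff_add]
  map_smul' κ x := by
    refine Prod.ext ?_ ?_ <;> funext k
    · show (polyEmb Fq (κ • x.1 k)).coeff b = κ * (polyEmb Fq (x.1 k)).coeff b
      rw [polyEmb_smul, coeff_C_mul]
    · show (wfun γ (κ • x) k).coeff c = κ * (wfun γ x k).coeff c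
      rw [wfun_smul, coeff_C_mul]

lemma phiMap_eq_zero_iff {γ : Matrix (Fin s) (Fin s) (LaurentSeries Fq)} {b c : ℤ}
    {x : PPair Fq s} (hx : x ∈ SolM γ b c) :
    phiMap γ b c x = 0 ↔ x ∈ SolM γ (b + 1) (c + 1) := by
  obtain ⟨h1, h2⟩ := hx
  constructor
  · intro h
    have hA := congrArg Prod.fst h
    have hB := congrArg Prod.snd h
    simp only [phiMap, LinearMap.coe_mk, AddHom.coe_mk, Prod.fst_zero, Prod.snd_zero] at hA hB
    constructor
    · intro j n hn
      rcases lt_or_ge n b with h' | h'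
      · exact h1 j n h'
      · have : n = b := by omega
        subst this
        exact congrFun hA j
    · intro i n hn
      rcases lt_or_ge n c with h' | h'
      · exact h2 i n h'
      · have : n = c := by omega
        subst this
        exact congrFun hB i
  · rintro ⟨g1, g2⟩
    refine Prod.ext ?_ ?_ <;> funext k
    · exact g1 k b (by omega)
    · exact g2 k c (by omega)

/-- first-isomorphism-style counting for a linear map. -/
lemma card_eq_ker_mul_range {M N : Type} [AddCommGroup M] [Module Fq M]
    [AddCommGroup N] [Module Fq N] (f : M →ₗ[Fq] N) :
    Nat.card M = Nat.card ↥(LinearMap.ker f) * Nat.card ↥(LinearMap.range f) := by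
  classical
  have sec : ∀ y : ↥(LinearMap.range f), ∃ x : M, f x = y.1 := fun y =>
    LinearMap.mem_range.mp y.2
  choose g hg using sec
  have e : M ≃ ↥(LinearMap.range f) × ↥(LinearMap.ker f) :=
    { toFun := fun x => (⟨f x, LinearMap.mem_range_self f x⟩,
        ⟨x - g ⟨f x, LinearMap.mem_range_self f x⟩, by
          rw [LinearMap.mem_ker, map_sub, hg ⟨f x, LinearMap.mem_range_self f x⟩, sub_self]⟩)
      invFun := fun p => g p.1 + p.2.1
      left_inv := fun x => by simp
      right_inv := fun p => by
        obtain ⟨y, k⟩ := p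
        have hf : f (g y + k.1) = y.1 := by
          rw [map_add, hg y, (LinearMap.mem_ker.mp k.2), add_zero]
        have hy : (⟨f (g y + k.1), LinearMap.mem_range_self f _⟩ : ↥(LinearMap.range f)) = y :=
          Subtype.ext hf
        refine Prod.ext hy ?_
        apply Subtype.ext
        simp only [hy]
        abel }
  rw [Nat.card_congr e, Nat.card_prod, mul_comm]

/-- the standard symplectic form on `F_q^s × F_q^s`. -/
def sform (v w : (Fin s → Fq) × (Fin s → Fq)) : Fq :=
  ∑ i, (v.2 i * w.1 i - w.2 i * v.1 i)

/-- an isotropic subspace for the standard symplectic form has at most `q^s` elements. -/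
lemma card_isotropic_le (W : Submodule Fq ((Fin s → Fq) × (Fin s → Fq)))
    (hW : ∀ x ∈ W, ∀ y ∈ W, sform x y = 0) :
    Nat.card ↥W ≤ Fintype.card Fq ^ s := by
  classical
  have hsf : ∀ (x y : (Fin s → Fq) × (Fin s → Fq)),
      sform x y = ∑ i, (x.2 i * y.1 i - y.2 i * x.1 i) := fun _ _ => rfl
  let B : ((Fin s → Fq) × (Fin s → Fq)) →ₗ[Fq] ((Fin s → Fq) × (Fin s → Fq)) →ₗ[Fq] Fq :=
    LinearMap.mk₂ Fq sform
    (by intro x x' y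
        simp only [hsf, Prod.fst_add, Prod.snd_add, Pi.add_apply, ← Finset.sum_add_distrib]
        apply Finset.sum_congr rfl; intros; ring)
    (by intro κ x y
        simp only [hsf, Prod.smul_fst, Prod.smul_snd, Pi.smul_apply, smul_eq_mul,
          Finset.mul_sum]
        apply Finset.sum_congr rfl; intros; ring)
    (by intro x y y'
        simp only [hsf, Prod.fst_add, Prod.snd_add, Pi.add_apply, ← Finset.sum_add_distrib]
        apply Finset.sum_congr rfl; intros; ring)
    (by intro κ x y
        simp only [hsf, Prod.smul_fst, Prod.smul_snd, Pi.smul_apply, smul_eq_mul,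
          Finset.mul_sum]
        apply Finset.sum_congr rfl; intros; ring)
  have Binj : Function.Injective B := by
    rw [← LinearMap.ker_eq_bot]
    rw [LinearMap.ker_eq_bot']
    intro x hx
    have h2 : ∀ i, x.2 i = 0 := by
      intro i
      have := congrArg (fun φ => φ ((Pi.single i 1 : Fin s → Fq), (0 : Fin s → Fq))) hx
      simp only [LinearMap.zero_apply] at this
      rw [show B x (Pi.single i 1, 0) = sform x (Pi.single i 1, 0) from rfl, hsf] at this
      simpa [Pi.single_apply, mul_ite, Finset.sum_ite_eq'] using this
    have h1 : ∀ i, x.1 i = 0 := by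
      intro i
      have := congrArg (fun φ => φ ((0 : Fin s → Fq), (Pi.single i 1 : Fin s → Fq))) hx
      simp only [LinearMap.zero_apply] at this
      rw [show B x (0, Pi.single i 1) = sform x (0, Pi.single i 1) from rfl, hsf] at this
      simpa [Pi.single_apply, ite_mul, Finset.sum_ite_eq'] using this
    exact Prod.ext (funext h1) (funext h2)
  have Bsurj : Function.Surjective B := by
    rw [← LinearMap.range_eq_top]
    apply Submodule.eq_top_of_finrank_eq
    rw [LinearMap.finrank_range_of_inj Binj, Subspace.dual_finrank_eq]
  let g : ((Fin s → Fq) × (Fin s → Fq)) →ₗ[Fq] Module.Dual Fq ↥W := (W.subtype.dualMap).comp B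
  have gsurj : Function.Surjective g :=
    (LinearMap.dualMap_surjective_of_injective W.injective_subtype).comp Bsurj
  have hWker : W ≤ LinearMap.ker g := by
    intro w hw
    rw [LinearMap.mem_ker]
    apply LinearMap.ext
    rintro ⟨y, hy⟩
    simp only [g, LinearMap.comp_apply, LinearMap.dualMap_apply, LinearMap.zero_apply]
    show B w (W.subtype ⟨y, hy⟩) = 0
    exact hW w hw y hy
  have hrank := LinearMap.finrank_range_add_finrank_ker g
  have hrg : Module.finrank Fq ↥(LinearMap.range g) = Module.finrank Fq ↥W := by
    rw [LinearMap.range_eq_top.mpr gsurj, finrank_top, Subspace.dual_finrank_eq]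
  have hV : Module.finrank Fq ((Fin s → Fq) × (Fin s → Fq)) = s + s := by
    rw [Module.finrank_prod, Module.finrank_pi, Fintype.card_fin]
  have hWle : Module.finrank Fq ↥W ≤ Module.finrank Fq ↥(LinearMap.ker g) :=
    Submodule.finrank_mono hWker
  have hfr : Module.finrank Fq ↥W ≤ s := by omega
  haveI : Fintype ↥W := Fintype.ofFinite _
  rw [Nat.card_eq_fintype_card, Module.card_eq_pow_finrank (K := Fq) (V := ↥W)]
  exact Nat.pow_le_pow_right Fintype.card_pos hfr

lemma coeff_sum (n : ℤ) (g : Fin s → LaurentSeries Fq) :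
    (∑ i, g i).coeff n = ∑ i, (g i).coeff n :=
  map_sum (coeffHom n) g Finset.univ

/-- the key cancellation: on solutions, `phiMap` has symplectically isotropic image. -/
lemma isotropic_phiMap {γ : Matrix (Fin s) (Fin s) (LaurentSeries Fq)}
    (hγ : ∀ i j, γ i j = γ j i) {b c : ℤ} (hbc : 1 ≤ b + c)
    {x y : PPair Fq s} (hx : x ∈ SolM γ b c) (hy : y ∈ SolM γ b c) :
    sform (phiMap γ b c x) (phiMap γ b c y) = 0 := by
  obtain ⟨hx1, hx2⟩ := hx
  obtain ⟨hy1, hy2⟩ := hy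
  have hterm : ∀ i, (wfun γ x i).coeff c * (polyEmb Fq (y.1 i)).coeff b
      = (wfun γ x i * polyEmb Fq (y.1 i)).coeff (c + b) := fun i =>
    (smallAt_coeff_mul (hx2 i) (hy1 i)).symm
  have hterm' : ∀ i, (wfun γ y i).coeff c * (polyEmb Fq (x.1 i)).coeff b
      = (wfun γ y i * polyEmb Fq (x.1 i)).coeff (c + b) := fun i =>
    (smallAt_coeff_mul (hy2 i) (hx1 i)).symm
  have hs : sform (phiMap γ b c x) (phiMap γ b c y)
      = (∑ i, (wfun γ x i * polyEmb Fq (y.1 i)) - ∑ i, (wfun γ y i * polyEmb Fq (x.1 i))).coeff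
          (c + b) := by
    rw [HahnSeries.coeff_sub, coeff_sum, coeff_sum, ← Finset.sum_sub_distrib]
    apply Finset.sum_congr rfl
    intro i _
    rw [← hterm i, ← hterm' i]
    rfl
  -- the cross terms cancel by symmetry of γ
  have expand : ∀ u v : PPair Fq s, ∑ i, (wfun γ u i * polyEmb Fq (v.1 i))
      = (∑ i, ∑ j, γ i j * (polyEmb Fq (u.1 j) * polyEmb Fq (v.1 i)))
        + ∑ i, polyEmb Fq (u.2 i) * polyEmb Fq (v.1 i) := by
    intro u v
    rw [← Finset.sum_add_distrib]
    apply Finset.sum_congr rfl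
    intro i _
    rw [wfun, add_mul, Finset.sum_mul]
    congr 1
    apply Finset.sum_congr rfl
    intro j _
    ring
  have cross : (∑ i, ∑ j, γ i j * (polyEmb Fq (x.1 j) * polyEmb Fq (y.1 i)))
      = ∑ i, ∑ j, γ i j * (polyEmb Fq (y.1 j) * polyEmb Fq (x.1 i)) := by
    rw [Finset.sum_comm]
    apply Finset.sum_congr rfl
    intro i _
    apply Finset.sum_congr rfl
    intro j _
    rw [hγ j i]
    ring
  have hpoly : (∑ i, (wfun γ x i * polyEmb Fq (y.1 i)) - ∑ i, (wfun γ y i * polyEmb Fq (x.1 i)))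
      = polyEmb Fq (∑ i, (x.2 i * y.1 i - y.2 i * x.1 i)) := by
    rw [expand x y, expand y x, cross, map_sum]
    have : ∀ i, polyEmb Fq (x.2 i * y.1 i - y.2 i * x.1 i)
        = polyEmb Fq (x.2 i) * polyEmb Fq (y.1 i) - polyEmb Fq (y.2 i) * polyEmb Fq (x.1 i) := by
      intro i; rw [map_sub, map_mul, map_mul]
    simp only [this, Finset.sum_sub_distrib]
    abel
  rw [hs, hpoly, polyEmb_coeff_pos (by omega)]

/-- The basic shrinking step: going down one level loses at most a factor `q^s`. -/
lemma step_card {γ : Matrix (Fin s) (Fin s) (LaurentSeries Fq)}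
    (hγ : ∀ i j, γ i j = γ j i) (b c : ℤ) (hbc : 1 ≤ b + c) :
    Nat.card ↥(SolM γ b c) ≤ Nat.card ↥(SolM γ (b + 1) (c + 1)) * Fintype.card Fq ^ s := by
  classical
  haveI := solM_finite γ b c
  haveI := solM_finite γ (b + 1) (c + 1)
  set f := (phiMap γ b c).comp (SolM γ b c).subtype with hf
  have hcard := card_eq_ker_mul_range f
  -- kernel is the next solution space
  have hker : Nat.card ↥(LinearMap.ker f) = Nat.card ↥(SolM γ (b + 1) (c + 1)) := by
    apply Nat.card_congr
    refine
      { toFun := fun z => ⟨z.1.1, (phiMap_eq_zero_iff z.1.2).mp (LinearMap.mem_ker.mp z.2)⟩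
        invFun := fun z => ⟨⟨z.1, solM_antitone (by omega) (by omega) z.2⟩, by
          rw [LinearMap.mem_ker]
          exact (phiMap_eq_zero_iff (solM_antitone (by omega) (by omega) z.2)).mpr z.2⟩
        left_inv := fun z => Subtype.ext (Subtype.ext rfl)
        right_inv := fun z => Subtype.ext rfl }
  -- the range is isotropic
  have hrange : Nat.card ↥(LinearMap.range f) ≤ Fintype.card Fq ^ s := by
    apply card_isotropic_le
    intro v hv w hw
    obtain ⟨zv, hzv⟩ := LinearMap.mem_range.mp hv
    obtain ⟨zw, hzw⟩ := LinearMap.mem_range.mp hw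
    rw [← hzv, ← hzw]
    exact isotropic_phiMap hγ hbc zv.2 zw.2
  calc Nat.card ↥(SolM γ b c)
      = Nat.card ↥(LinearMap.ker f) * Nat.card ↥(LinearMap.range f) := hcard
    _ ≤ Nat.card ↥(SolM γ (b + 1) (c + 1)) * Fintype.card Fq ^ s := by
        rw [hker]; exact Nat.mul_le_mul_left _ hrange

lemma iterate_card {γ : Matrix (Fin s) (Fin s) (LaurentSeries Fq)}
    (hγ : ∀ i j, γ i j = γ j i) (b c : ℤ) (hbc : 1 ≤ b + c) (k : ℕ) :
    Nat.card ↥(SolM γ b c) ≤ Nat.card ↥(SolM γ (b + k) (c + k)) * (Fintype.card Fq ^ s) ^ k := by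
  induction k with
  | zero => simp
  | succ k ih =>
      have hstep := step_card hγ (b + k) (c + k) (by omega)
      have hcast : ((b : ℤ) + (k + 1 : ℕ)) = (b + k) + 1 := by push_cast; ring
      have hcast' : ((c : ℤ) + (k + 1 : ℕ)) = (c + k) + 1 := by push_cast; ring
      calc Nat.card ↥(SolM γ b c)
          ≤ Nat.card ↥(SolM γ (b + k) (c + k)) * (Fintype.card Fq ^ s) ^ k := ih
        _ ≤ (Nat.card ↥(SolM γ ((b + k) + 1) ((c + k) + 1)) * Fintype.card Fq ^ s)
              * (Fintype.card Fq ^ s) ^ k := Nat.mul_le_mul_right _ hstep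
        _ = Nat.card ↥(SolM γ (b + (k + 1 : ℕ)) (c + (k + 1 : ℕ)))
              * (Fintype.card Fq ^ s) ^ (k + 1) := by
            rw [hcast, hcast', pow_succ]
            ring

lemma mcount_eq (γ : Matrix (Fin s) (Fin s) (LaurentSeries Fq)) (a Z : ℝ) :
    Mcount Fq γ a Z = Nat.card ↥(SolM γ (⌊-(a + Z)⌋ + 1) (⌊-(Z - a)⌋ + 1)) := by
  have hset : {uv : (Fin s → Polynomial Fq) × (Fin s → Polynomial Fq) |
      (∀ j, Kabs Fq (polyEmb Fq (uv.1 j)) < (Fintype.card Fq : ℝ) ^ (a + Z)) ∧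
      ∀ i, Kabs Fq ((∑ j, γ i j * polyEmb Fq (uv.1 j)) + polyEmb Fq (uv.2 i))
        < (Fintype.card Fq : ℝ) ^ (Z - a)}
      = ↑(SolM γ (⌊-(a + Z)⌋ + 1) (⌊-(Z - a)⌋ + 1)) := by
    ext uv
    simp only [Set.mem_setOf_eq, SetLike.mem_coe, mem_solM, wfun]
    exact and_congr (forall_congr' fun j => Kabs_lt_iff _ _)
      (forall_congr' fun i => Kabs_lt_iff _ _)
  rw [Mcount, hset, ← Nat.card_coe_set_eq, SetLike.coe_sort_coe]
end ShrinkAux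

/-- Davenport's shrinking lemma over function fields: for `Z₁ ≤ Z₂ ≤ 0`,
`M(a;Z₁)/M(a;Z₂) ≫ q^{s(Z₁ - Z₂)}`, with implied constant depending only on `s` and `q`. -/
theorem shrinking_lemma (s : ℕ) (hs : 0 < s) :
    ∃ C : ℝ, 0 < C ∧
      ∀ (γ : Matrix (Fin s) (Fin s) (LaurentSeries Fq)), (∀ i j, γ i j = γ j i) →
        ∀ a Z₁ Z₂ : ℝ, Z₁ ≤ Z₂ → Z₂ ≤ 0 →
          C * (Fintype.card Fq : ℝ) ^ ((s : ℝ) * (Z₁ - Z₂)) * (Mcount Fq γ a Z₂ : ℝ)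
            ≤ (Mcount Fq γ a Z₁ : ℝ) := by
  classical
  have hq1 : (1 : ℝ) < (Fintype.card Fq : ℝ) := by
    exact_mod_cast (Fintype.one_lt_card (α := Fq))
  have hq0 : (0 : ℝ) < (Fintype.card Fq : ℝ) := lt_trans one_pos hq1
  refine ⟨(Fintype.card Fq : ℝ) ^ (-(s : ℝ)), Real.rpow_pos_of_pos hq0 _, ?_⟩
  intro γ hγ a Z₁ Z₂ h12 h20
  -- the integer cut-offs
  have fb1 : (⌊-(a + Z₁)⌋ : ℝ) ≤ -(a + Z₁) := Int.floor_le _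
  have fb2 : (-(a + Z₂) : ℝ) - 1 < (⌊-(a + Z₂)⌋ : ℝ) := Int.sub_one_lt_floor _
  have fc1 : (⌊-(Z₁ - a)⌋ : ℝ) ≤ -(Z₁ - a) := Int.floor_le _
  have fc2 : (-(Z₂ - a) : ℝ) - 1 < (⌊-(Z₂ - a)⌋ : ℝ) := Int.sub_one_lt_floor _
  set m : ℤ := max (⌊-(a + Z₁)⌋ - ⌊-(a + Z₂)⌋) (⌊-(Z₁ - a)⌋ - ⌊-(Z₂ - a)⌋) with hm
  set k : ℕ := m.toNat with hk0
  have hkb : ⌊-(a + Z₁)⌋ + 1 ≤ (⌊-(a + Z₂)⌋ + 1) + (k : ℤ) := by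
    have h1 : ⌊-(a + Z₁)⌋ - ⌊-(a + Z₂)⌋ ≤ m := le_max_left _ _
    have h2 : m ≤ (k : ℤ) := Int.self_le_toNat m
    omega
  have hkc : ⌊-(Z₁ - a)⌋ + 1 ≤ (⌊-(Z₂ - a)⌋ + 1) + (k : ℤ) := by
    have h1 : ⌊-(Z₁ - a)⌋ - ⌊-(Z₂ - a)⌋ ≤ m := le_max_right _ _
    have h2 : m ≤ (k : ℤ) := Int.self_le_toNat m
    omega
  have hk : (k : ℝ) ≤ Z₂ - Z₁ + 1 := by
    rcases le_or_gt m 0 with h | h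
    · rw [hk0, Int.toNat_of_nonpos h]
      push_cast
      linarith
    · have hkm : ((k : ℤ) : ℝ) = (m : ℝ) := by
        rw [hk0, Int.toNat_of_nonneg h.le]
      have hm1 : ((⌊-(a + Z₁)⌋ - ⌊-(a + Z₂)⌋ : ℤ) : ℝ) ≤ Z₂ - Z₁ + 1 := by
        push_cast; linarith
      have hm2 : ((⌊-(Z₁ - a)⌋ - ⌊-(Z₂ - a)⌋ : ℤ) : ℝ) ≤ Z₂ - Z₁ + 1 := by
        push_cast; linarith
      have hmle : ((m : ℤ) : ℝ) ≤ Z₂ - Z₁ + 1 := by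
        rw [hm]
        push_cast [Int.cast_max]
        exact max_le (by exact_mod_cast hm1) (by exact_mod_cast hm2)
      calc (k : ℝ) = ((k : ℤ) : ℝ) := by push_cast; ring
        _ = (m : ℝ) := hkm
        _ ≤ Z₂ - Z₁ + 1 := hmle
  have hbc : 1 ≤ (⌊-(a + Z₂)⌋ + 1) + (⌊-(Z₂ - a)⌋ + 1) := by
    have hcast : (-2 : ℝ) < ((⌊-(a + Z₂)⌋ + ⌊-(Z₂ - a)⌋ : ℤ) : ℝ) := by
      push_cast
      nlinarith
    have : (-2 : ℤ) < ⌊-(a + Z₂)⌋ + ⌊-(Z₂ - a)⌋ := by exact_mod_cast hcast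
    omega
  -- the counting chain
  have hchain : Mcount Fq γ a Z₂ ≤ Mcount Fq γ a Z₁ * (Fintype.card Fq ^ s) ^ k := by
    rw [mcount_eq, mcount_eq]
    calc Nat.card ↥(SolM γ (⌊-(a + Z₂)⌋ + 1) (⌊-(Z₂ - a)⌋ + 1))
        ≤ Nat.card ↥(SolM γ ((⌊-(a + Z₂)⌋ + 1) + k) ((⌊-(Z₂ - a)⌋ + 1) + k))
            * (Fintype.card Fq ^ s) ^ k := iterate_card hγ _ _ hbc k
      _ ≤ Nat.card ↥(SolM γ (⌊-(a + Z₁)⌋ + 1) (⌊-(Z₁ - a)⌋ + 1))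
            * (Fintype.card Fq ^ s) ^ k :=
          Nat.mul_le_mul_right _ (card_solM_le_of_le hkb hkc)
  have hreal : (Mcount Fq γ a Z₂ : ℝ)
      ≤ (Mcount Fq γ a Z₁ : ℝ) * (Fintype.card Fq : ℝ) ^ (s * k) := by
    have : ((Mcount Fq γ a Z₂ : ℕ) : ℝ)
        ≤ ((Mcount Fq γ a Z₁ * (Fintype.card Fq ^ s) ^ k : ℕ) : ℝ) := Nat.cast_le.mpr hchain
    push_cast at this
    rwa [← pow_mul] at this
  have hpow_pos : (0 : ℝ) < (Fintype.card Fq : ℝ) ^ (s * k) := pow_pos hq0 _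
  have key : (Fintype.card Fq : ℝ) ^ (-(s : ℝ))
      * (Fintype.card Fq : ℝ) ^ ((s : ℝ) * (Z₁ - Z₂))
      ≤ ((Fintype.card Fq : ℝ) ^ (s * k))⁻¹ := by
    rw [← Real.rpow_add hq0]
    rw [← Real.rpow_natCast (Fintype.card Fq : ℝ) (s * k), ← Real.rpow_neg hq0.le]
    rw [Real.rpow_le_rpow_left_iff hq1]
    push_cast
    nlinarith [hk, Nat.cast_nonneg (α := ℝ) s]
  calc (Fintype.card Fq : ℝ) ^ (-(s : ℝ)) * (Fintype.card Fq : ℝ) ^ ((s : ℝ) * (Z₁ - Z₂))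
        * (Mcount Fq γ a Z₂ : ℝ)
      ≤ ((Fintype.card Fq : ℝ) ^ (s * k))⁻¹ * (Mcount Fq γ a Z₂ : ℝ) :=
        mul_le_mul_of_nonneg_right key (Nat.cast_nonneg _)
    _ ≤ ((Fintype.card Fq : ℝ) ^ (s * k))⁻¹
          * ((Mcount Fq γ a Z₁ : ℝ) * (Fintype.card Fq : ℝ) ^ (s * k)) :=
        mul_le_mul_of_nonneg_left hreal (inv_nonneg.mpr hpow_pos.le)
    _ = (Mcount Fq γ a Z₁ : ℝ) := by
        field_simp

end
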